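/- The quantity β(Λ_m, Λ_{m'}) can be expressed basis-independently: β(Λ_m, Λ_{m'}) = n·Cov(ŝ_m(ξ), ŝ_{m'}(ξ)) − (n+1)·Cov(s_m(ξ), s_{m'}(ξ)), where ξ is an independent copy of ξ_1 and the covariance is over both ξ and the sample. Consequently β(m,m') := β(Λ_m,Λ_m) + β(Λ_{m'},Λ_{m'}) − 2β(Λ_m,Λ_{m'}) = n·Var((ŝ_m − ŝ_{m'})(ξ)) − (n+1)·Var((s_m − s_{m'})(ξ)). -/

import Mathlib

open Finset MeasureTheory

/-- Empirical mean of `f` over the sample points indexed by `A`. -/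
noncomputable def emp {X : Type*} {n : ℕ} (ξ : Fin n → X) (A : Finset (Fin n))
    (f : X → ℝ) : ℝ :=
  (A.card : ℝ)⁻¹ * ∑ i ∈ A, f (ξ i)


section Aux
variable {Y : Type*} [MeasurableSpace Y] {ν : Measure Y}

lemma l2_mul_integrable {f g : Y → ℝ} (hf : MemLp f 2 ν) (hg : MemLp g 2 ν) :
    Integrable (fun x => f x * g x) ν := by
  rw [← memLp_one_iff_integrable]
  have h : (1 : ENNReal) / 1 = 1 / 2 + 1 / 2 := by
    simp [one_div, ENNReal.inv_two_add_inv_two]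
  exact (hg.smul hf : MemLp (f • g) 1 ν)

variable {X : Type*} [MeasurableSpace X] (P : Measure X) [IsProbabilityMeasure P] {n : ℕ}

lemma measurePreserving_eval' (i : Fin n) :
    MeasurePreserving (fun ω : Fin n → X => ω i) (Measure.pi fun _ => P) P := by
  refine ⟨measurable_pi_apply i, ?_⟩
  ext s hs
  rw [Measure.map_apply (measurable_pi_apply i) hs]
  have h : (fun ω : Fin n → X => ω i) ⁻¹' s
      = Set.pi Set.univ (Function.update (fun _ : Fin n => Set.univ) i s) := by
    ext ω
    simp [Function.update_apply]
  rw [h, Measure.pi_pi]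
  simp only [Function.update_apply, apply_ite P, measure_univ]
  simp

lemma integral_eval' (i : Fin n) {f : X → ℝ} (hf : AEStronglyMeasurable f P) :
    ∫ ω, f (ω i) ∂(Measure.pi fun _ : Fin n => P) = ∫ x, f x ∂P := by
  conv_rhs => rw [← (measurePreserving_eval' P i).map_eq]
  rw [integral_map (measurable_pi_apply i).aemeasurable
    (by rwa [(measurePreserving_eval' P i).map_eq])]

lemma integral_pi_prod (F : Fin n → X → ℝ) :
    ∫ ω : Fin n → X, ∏ i, F i (ω i) ∂(Measure.pi fun _ => P) = ∏ i, ∫ x, F i x ∂P := by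
  letI : MeasureSpace X := { volume := P }
  haveI : SigmaFinite (volume : Measure X) := inferInstanceAs (SigmaFinite P)
  exact MeasureTheory.integral_fintype_prod_eq_prod F


lemma memℒp_eval' (i : Fin n) {f : X → ℝ} (hf : MemLp f 2 P) :
    MemLp (fun ω : Fin n → X => f (ω i)) 2 (Measure.pi fun _ => P) :=
  hf.comp_measurePreserving (measurePreserving_eval' P i)

lemma prod_two_aux {M : Type*} [CommMonoid M] {n : ℕ} {i j : Fin n} (hij : i ≠ j)
    (a b : M) (F : Fin n → M) (hFi : F i = a) (hFj : F j = b)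
    (hF : ∀ k, k ≠ i → k ≠ j → F k = 1) : ∏ k, F k = a * b := by
  classical
  have h1 : ∏ k, F k = ∏ k ∈ ({i, j} : Finset (Fin n)), F k := by
    refine (Finset.prod_subset (Finset.subset_univ _) ?_).symm
    intro k _ hk
    simp only [Finset.mem_insert, Finset.mem_singleton, not_or] at hk
    exact hF k hk.1 hk.2
  rw [h1, Finset.prod_insert (by simp [hij]), Finset.prod_singleton, hFi, hFj]

lemma integral_eval_two (hn : 0 < n) {i j : Fin n} (hij : i ≠ j) (f g : X → ℝ) :
    ∫ ω, f (ω i) * g (ω j) ∂(Measure.pi fun _ : Fin n => P)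
      = (∫ x, f x ∂P) * ∫ x, g x ∂P := by
  classical
  set F : Fin n → X → ℝ := fun k => if k = i then f else if k = j then g else fun _ => 1 with hF
  have h1 : ∀ ω : Fin n → X, f (ω i) * g (ω j) = ∏ k, F k (ω k) := by
    intro ω
    refine (prod_two_aux hij _ _ _ ?_ ?_ ?_).symm
    · simp [hF]
    · simp [hF, hij.symm]
    · intro k hki hkj; simp [hF, hki, hkj]
  simp_rw [h1]
  rw [integral_pi_prod]
  refine prod_two_aux hij _ _ _ ?_ ?_ ?_
  · simp [hF]
  · simp [hF, hij.symm]
  · intro k hki hkj; simp [hF, hki, hkj]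

lemma memℒp_emp {f : X → ℝ} (hf : MemLp f 2 P) :
    MemLp (fun ω : Fin n → X => emp ω Finset.univ f) 2 (Measure.pi fun _ => P) := by
  have h : (fun ω : Fin n → X => emp ω Finset.univ f)
      = fun ω : Fin n → X => ((n : ℝ))⁻¹ * ∑ i, f (ω i) := by
    funext ω; simp [emp]
  rw [h]
  have h2 := (memLp_finsetSum' (μ := Measure.pi fun _ : Fin n => P) Finset.univ
    (f := fun i (ω : Fin n → X) => f (ω i)) (fun i _ => memℒp_eval' P i hf)).const_mul ((n : ℝ))⁻¹
  simpa [← Finset.sum_fn] using h2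

lemma integral_emp (hn : 0 < n) {f : X → ℝ} (hf : MemLp f 2 P) :
    ∫ ω, emp ω Finset.univ f ∂(Measure.pi fun _ : Fin n => P) = ∫ x, f x ∂P := by
  simp only [emp, Finset.card_univ, Fintype.card_fin]
  rw [integral_const_mul, integral_finset_sum _
    (fun i _ => (memℒp_eval' P i hf).integrable one_le_two)]
  have h : ∀ i : Fin n, ∫ ω, f (ω i) ∂(Measure.pi fun _ : Fin n => P) = ∫ x, f x ∂P :=
    fun i => integral_eval' P i hf.1
  simp_rw [h, Finset.sum_const, Finset.card_univ, Fintype.card_fin, nsmul_eq_mul]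
  rw [← mul_assoc, inv_mul_cancel₀ (by positivity : (n : ℝ) ≠ 0), one_mul]

lemma integral_emp_mul (hn : 0 < n) {f g : X → ℝ} (hf : MemLp f 2 P) (hg : MemLp g 2 P) :
    ∫ ω, emp ω Finset.univ f * emp ω Finset.univ g ∂(Measure.pi fun _ : Fin n => P)
      = (n : ℝ)⁻¹ * ∫ x, f x * g x ∂P
        + (1 - (n : ℝ)⁻¹) * ((∫ x, f x ∂P) * ∫ x, g x ∂P) := by
  have hexp : ∀ ω : Fin n → X, emp ω Finset.univ f * emp ω Finset.univ g
      = (n : ℝ)⁻¹ * ((n : ℝ)⁻¹ * ∑ i, ∑ j, f (ω i) * g (ω j)) := by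
    intro ω
    simp only [emp, Finset.card_univ, Fintype.card_fin]
    rw [← Finset.sum_mul_sum]
    ring
  simp_rw [hexp]
  rw [integral_const_mul, integral_const_mul]
  rw [integral_finset_sum _ (fun i _ => integrable_finset_sum _
    (fun j _ => l2_mul_integrable (memℒp_eval' P i hf) (memℒp_eval' P j hg)))]
  have hval : ∀ i j : Fin n, (∫ ω, f (ω i) * g (ω j) ∂(Measure.pi fun _ : Fin n => P))
      = if i = j then (∫ x, f x * g x ∂P) else (∫ x, f x ∂P) * ∫ x, g x ∂P := by
    intro i j
    by_cases hij : i = j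
    · subst hij
      simp only [if_pos rfl]
      exact integral_eval' P i (hf.1.mul hg.1)
    · rw [if_neg hij]
      exact integral_eval_two P hn hij f g
  have hin : ∀ i : Fin n,
      ∫ ω, (∑ j, f (ω i) * g (ω j)) ∂(Measure.pi fun _ : Fin n => P)
        = ∑ j, ∫ ω, f (ω i) * g (ω j) ∂(Measure.pi fun _ : Fin n => P) := by
    intro i
    exact integral_finset_sum _
      (fun j _ => l2_mul_integrable (memℒp_eval' P i hf) (memℒp_eval' P j hg))
  simp_rw [hin, hval]
  set A := ∫ x, f x * g x ∂P
  set B := (∫ x, f x ∂P) * ∫ x, g x ∂P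
  have hrow : ∀ i : Fin n, ∑ j, (if i = j then A else B) = A + ((n : ℝ) - 1) * B := by
    intro i
    have h : ∀ j : Fin n, (if i = j then A else B) = B + (if i = j then A - B else 0) :=
      fun j => by split_ifs <;> ring
    simp_rw [h, Finset.sum_add_distrib, Finset.sum_const, Finset.sum_ite_eq,
      Finset.card_univ, Fintype.card_fin, nsmul_eq_mul, Finset.mem_univ, if_true]
    ring
  simp_rw [hrow, Finset.sum_const, Finset.card_univ, Fintype.card_fin, nsmul_eq_mul]
  have hn' : (n : ℝ) ≠ 0 := by positivity
  field_simp

lemma integral_snd' {X : Type*} [MeasurableSpace X] (P : Measure X) [IsProbabilityMeasure P]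
    {n : ℕ} (h : X → ℝ) :
    ∫ ω, h ω.2 ∂((Measure.pi fun _ : Fin n => P).prod P) = ∫ x, h x ∂P := by
  calc ∫ ω, h ω.2 ∂((Measure.pi fun _ : Fin n => P).prod P)
      = ∫ ω, (fun _ : Fin n → X => (1 : ℝ)) ω.1 * h ω.2
          ∂((Measure.pi fun _ : Fin n => P).prod P) := by simp
    _ = (∫ _ω, (1 : ℝ) ∂(Measure.pi fun _ : Fin n => P)) * ∫ x, h x ∂P :=
        integral_prod_mul (fun _ => (1 : ℝ)) h
    _ = ∫ x, h x ∂P := by simp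

section Core
variable {X : Type*} [MeasurableSpace X] (P : Measure X) [IsProbabilityMeasure P] {n : ℕ}

lemma integral_T {Λ : Type*} [Fintype Λ] (δ ε : Λ → X → ℝ)
    (hδ : ∀ l, MemLp (δ l) 2 P) (hε : ∀ l, MemLp (ε l) 2 P) (hn : 0 < n) :
    ∫ ω, (∑ l, emp ω.1 Finset.univ (δ l) * ε l ω.2)
        ∂((Measure.pi fun _ : Fin n => P).prod P)
      = ∑ l, (∫ x, δ l x ∂P) * ∫ x, ε l x ∂P := by
  rw [integral_finset_sum _ (fun l _ => Integrable.mul_prod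
    ((memℒp_emp P (hδ l)).integrable one_le_two) ((hε l).integrable one_le_two))]
  refine Finset.sum_congr rfl fun l _ => ?_
  exact (integral_prod_mul (fun ω₁ => emp ω₁ Finset.univ (δ l)) (fun x => ε l x)).trans
    (by rw [integral_emp P hn (hδ l)])

lemma integral_TT {Λ₁ Λ₂ : Type*} [Fintype Λ₁] [Fintype Λ₂]
    (δ₁ ε₁ : Λ₁ → X → ℝ) (δ₂ ε₂ : Λ₂ → X → ℝ)
    (hδ₁ : ∀ l, MemLp (δ₁ l) 2 P) (hε₁ : ∀ l, MemLp (ε₁ l) 2 P)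
    (hδ₂ : ∀ l, MemLp (δ₂ l) 2 P) (hε₂ : ∀ l, MemLp (ε₂ l) 2 P) (hn : 0 < n) :
    ∫ ω, (∑ l, emp ω.1 Finset.univ (δ₁ l) * ε₁ l ω.2) *
          (∑ l, emp ω.1 Finset.univ (δ₂ l) * ε₂ l ω.2)
        ∂((Measure.pi fun _ : Fin n => P).prod P)
      = ∑ l₁, ∑ l₂, ((n : ℝ)⁻¹ * (∫ x, δ₁ l₁ x * δ₂ l₂ x ∂P)
            + (1 - (n : ℝ)⁻¹) * ((∫ x, δ₁ l₁ x ∂P) * ∫ x, δ₂ l₂ x ∂P))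
          * ∫ x, ε₁ l₁ x * ε₂ l₂ x ∂P := by
  have hre : ∀ ω : (Fin n → X) × X,
      (∑ l₁, ∑ l₂, (emp ω.1 Finset.univ (δ₁ l₁) * ε₁ l₁ ω.2)
        * (emp ω.1 Finset.univ (δ₂ l₂) * ε₂ l₂ ω.2))
      = ∑ l₁, ∑ l₂, (emp ω.1 Finset.univ (δ₁ l₁) * emp ω.1 Finset.univ (δ₂ l₂))
        * (ε₁ l₁ ω.2 * ε₂ l₂ ω.2) := fun ω =>
    Finset.sum_congr rfl fun _ _ => Finset.sum_congr rfl fun _ _ => by ring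
  simp_rw [Finset.sum_mul_sum, hre]
  rw [integral_finset_sum _ (fun l₁ _ => integrable_finset_sum _ (fun l₂ _ =>
    Integrable.mul_prod
      (l2_mul_integrable (memℒp_emp P (hδ₁ l₁)) (memℒp_emp P (hδ₂ l₂)))
      (l2_mul_integrable (hε₁ l₁) (hε₂ l₂))))]
  refine Finset.sum_congr rfl fun l₁ _ => ?_
  rw [integral_finset_sum _ (fun l₂ _ => Integrable.mul_prod
      (l2_mul_integrable (memℒp_emp P (hδ₁ l₁)) (memℒp_emp P (hδ₂ l₂)))
      (l2_mul_integrable (hε₁ l₁) (hε₂ l₂)))]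
  refine Finset.sum_congr rfl fun l₂ _ => ?_
  exact (integral_prod_mul (fun ω₁ => emp ω₁ Finset.univ (δ₁ l₁) * emp ω₁ Finset.univ (δ₂ l₂))
    (fun x => ε₁ l₁ x * ε₂ l₂ x)).trans (by rw [integral_emp_mul P hn (hδ₁ l₁) (hδ₂ l₂)])

lemma integral_S {Λ : Type*} [Fintype Λ] (a : Λ → ℝ) (ε : Λ → X → ℝ)
    (hε : ∀ l, MemLp (ε l) 2 P) :
    ∫ ω, (∑ l, a l * ε l ω.2) ∂((Measure.pi fun _ : Fin n => P).prod P)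
      = ∑ l, a l * ∫ x, ε l x ∂P := by
  rw [integral_snd' P (fun x => ∑ l, a l * ε l x)]
  rw [integral_finset_sum _ (fun l _ => ((hε l).integrable one_le_two).const_mul _)]
  simp_rw [integral_const_mul]

lemma integral_SS {Λ₁ Λ₂ : Type*} [Fintype Λ₁] [Fintype Λ₂]
    (a₁ : Λ₁ → ℝ) (ε₁ : Λ₁ → X → ℝ) (a₂ : Λ₂ → ℝ) (ε₂ : Λ₂ → X → ℝ)
    (hε₁ : ∀ l, MemLp (ε₁ l) 2 P) (hε₂ : ∀ l, MemLp (ε₂ l) 2 P) :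
    ∫ ω, (∑ l, a₁ l * ε₁ l ω.2) * (∑ l, a₂ l * ε₂ l ω.2)
        ∂((Measure.pi fun _ : Fin n => P).prod P)
      = ∑ l₁, ∑ l₂, (a₁ l₁ * a₂ l₂) * ∫ x, ε₁ l₁ x * ε₂ l₂ x ∂P := by
  rw [integral_snd' P (fun x => (∑ l, a₁ l * ε₁ l x) * (∑ l, a₂ l * ε₂ l x))]
  have hre : ∀ x : X,
      (∑ l₁, ∑ l₂, (a₁ l₁ * ε₁ l₁ x) * (a₂ l₂ * ε₂ l₂ x))
      = ∑ l₁, ∑ l₂, (a₁ l₁ * a₂ l₂) * (ε₁ l₁ x * ε₂ l₂ x) := fun x =>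
    Finset.sum_congr rfl fun _ _ => Finset.sum_congr rfl fun _ _ => by ring
  simp_rw [Finset.sum_mul_sum, hre]
  rw [integral_finset_sum _ (fun l₁ _ => integrable_finset_sum _ (fun l₂ _ =>
    (l2_mul_integrable (hε₁ l₁) (hε₂ l₂)).const_mul _))]
  refine Finset.sum_congr rfl fun l₁ _ => ?_
  rw [integral_finset_sum _ (fun l₂ _ => (l2_mul_integrable (hε₁ l₁) (hε₂ l₂)).const_mul _)]
  simp_rw [integral_const_mul]

theorem core (hn : 0 < n) {Λ₁ Λ₂ : Type*} [Fintype Λ₁] [Fintype Λ₂]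
    (δ₁ ε₁ : Λ₁ → X → ℝ) (δ₂ ε₂ : Λ₂ → X → ℝ)
    (hδ₁ : ∀ l, MemLp (δ₁ l) 2 P) (hε₁ : ∀ l, MemLp (ε₁ l) 2 P)
    (hδ₂ : ∀ l, MemLp (δ₂ l) 2 P) (hε₂ : ∀ l, MemLp (ε₂ l) 2 P) :
    (n : ℝ) * ((∫ ω, (∑ l, emp ω.1 Finset.univ (δ₁ l) * ε₁ l ω.2) *
            (∑ l, emp ω.1 Finset.univ (δ₂ l) * ε₂ l ω.2)
          ∂((Measure.pi fun _ : Fin n => P).prod P))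
        - (∫ ω, (∑ l, emp ω.1 Finset.univ (δ₁ l) * ε₁ l ω.2)
            ∂((Measure.pi fun _ : Fin n => P).prod P))
          * ∫ ω, (∑ l, emp ω.1 Finset.univ (δ₂ l) * ε₂ l ω.2)
            ∂((Measure.pi fun _ : Fin n => P).prod P))
      - ((n : ℝ) + 1) * ((∫ ω, (∑ l, (∫ x, δ₁ l x ∂P) * ε₁ l ω.2) *
            (∑ l, (∫ x, δ₂ l x ∂P) * ε₂ l ω.2)
          ∂((Measure.pi fun _ : Fin n => P).prod P))
        - (∫ ω, (∑ l, (∫ x, δ₁ l x ∂P) * ε₁ l ω.2)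
            ∂((Measure.pi fun _ : Fin n => P).prod P))
          * ∫ ω, (∑ l, (∫ x, δ₂ l x ∂P) * ε₂ l ω.2)
            ∂((Measure.pi fun _ : Fin n => P).prod P))
      = ∑ l₁, ∑ l₂, ((∫ x, δ₁ l₁ x * δ₂ l₂ x ∂P) * (∫ x, ε₁ l₁ x * ε₂ l₂ x ∂P)
          - 2 * ((∫ x, δ₁ l₁ x ∂P) * ∫ x, δ₂ l₂ x ∂P) * (∫ x, ε₁ l₁ x * ε₂ l₂ x ∂P)
          + ((∫ x, δ₁ l₁ x ∂P) * ∫ x, ε₁ l₁ x ∂P)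
            * ((∫ x, δ₂ l₂ x ∂P) * ∫ x, ε₂ l₂ x ∂P)) := by
  rw [integral_TT P δ₁ ε₁ δ₂ ε₂ hδ₁ hε₁ hδ₂ hε₂ hn,
    integral_T P δ₁ ε₁ hδ₁ hε₁ hn, integral_T P δ₂ ε₂ hδ₂ hε₂ hn,
    integral_SS P _ ε₁ _ ε₂ hε₁ hε₂,
    integral_S P _ ε₁ hε₁, integral_S P _ ε₂ hε₂,
    Finset.sum_mul_sum]
  rw [← Finset.sum_sub_distrib, ← Finset.sum_sub_distrib, Finset.mul_sum, Finset.mul_sum,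
    ← Finset.sum_sub_distrib]
  refine Finset.sum_congr rfl fun l₁ _ => ?_
  rw [← Finset.sum_sub_distrib, ← Finset.sum_sub_distrib, Finset.mul_sum, Finset.mul_sum,
    ← Finset.sum_sub_distrib]
  refine Finset.sum_congr rfl fun l₂ _ => ?_
  have hn' : (n : ℝ) ≠ 0 := by positivity
  field_simp
  ring

end Core
end Aux

/-- Basis-independent expression of `β(Λ_m, Λ_{m'})`:
`β(Λ_m,Λ_{m'}) = n Cov(ŝ_m(ξ), ŝ_{m'}(ξ)) − (n+1) Cov(s_m(ξ), s_{m'}(ξ))`, where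
`ξ` is an independent copy of `ξ₁` and the covariance is over both `ξ` and the
sample; consequently
`β(m,m') = n Var((ŝ_m − ŝ_{m'})(ξ)) − (n+1) Var((s_m − s_{m'})(ξ))`. -/
theorem stmt13 {X : Type*} [MeasurableSpace X] (P : Measure X) [IsProbabilityMeasure P]
    {n : ℕ} (hn : 0 < n)
    {Λ Λ' : Type*} [Fintype Λ] [Fintype Λ']
    (ψ : Λ → X → ℝ) (φ : Λ' → X → ℝ)
    (hψ : ∀ l, MemLp (ψ l) 2 P) (hφ : ∀ l, MemLp (φ l) 2 P) :
    let Q : Measure ((Fin n → X) × X) := (Measure.pi fun _ => P).prod P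
    let c : Λ → ℝ := fun l => ∫ x, ψ l x ∂P
    let c' : Λ' → ℝ := fun l => ∫ x, φ l x ∂P
    let β : ℝ := ∑ l, ∑ l', ((∫ x, ψ l x * φ l' x ∂P) - c l * c' l') ^ 2
    let β₁₁ : ℝ := ∑ l, ∑ l', ((∫ x, ψ l x * ψ l' x ∂P) - c l * c l') ^ 2
    let β₂₂ : ℝ := ∑ l, ∑ l', ((∫ x, φ l x * φ l' x ∂P) - c' l * c' l') ^ 2
    let shat : (Fin n → X) × X → ℝ := fun ω =>
      ∑ l, emp ω.1 Finset.univ (ψ l) * ψ l ω.2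
    let shat' : (Fin n → X) × X → ℝ := fun ω =>
      ∑ l, emp ω.1 Finset.univ (φ l) * φ l ω.2
    let sm : (Fin n → X) × X → ℝ := fun ω => ∑ l, c l * ψ l ω.2
    let sm' : (Fin n → X) × X → ℝ := fun ω => ∑ l, c' l * φ l ω.2
    let covQ : ((Fin n → X) × X → ℝ) → ((Fin n → X) × X → ℝ) → ℝ := fun F G =>
      (∫ ω, F ω * G ω ∂Q) - (∫ ω, F ω ∂Q) * (∫ ω, G ω ∂Q)
    let varQ : ((Fin n → X) × X → ℝ) → ℝ := fun F =>
      (∫ ω, (F ω) ^ 2 ∂Q) - (∫ ω, F ω ∂Q) ^ 2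
    β = n * covQ shat shat' - ((n : ℝ) + 1) * covQ sm sm' ∧
    β₁₁ + β₂₂ - 2 * β =
      n * varQ (fun ω => shat ω - shat' ω)
        - ((n : ℝ) + 1) * varQ (fun ω => sm ω - sm' ω) := by
  intro Q c c' β β₁₁ β₂₂ shat shat' sm sm' covQ varQ
  constructor
  · have hcore := core P hn ψ ψ φ φ hψ hψ hφ hφ
    refine Eq.trans ?_ hcore.symm
    refine Finset.sum_congr rfl fun l _ => Finset.sum_congr rfl fun l' _ => ?_
    ring
  · have hδ : ∀ l : Λ ⊕ Λ', MemLp (Sum.elim ψ φ l) 2 P := fun l =>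
      match l with | .inl a => hψ a | .inr a => hφ a
    have hε : ∀ l : Λ ⊕ Λ', MemLp (Sum.elim ψ (fun l x => -φ l x) l) 2 P := fun l =>
      match l with | .inl a => hψ a | .inr a => (hφ a).neg
    have key := core P hn (Sum.elim ψ φ) (Sum.elim ψ fun l x => -φ l x)
      (Sum.elim ψ φ) (Sum.elim ψ fun l x => -φ l x) hδ hε hδ hε
    have hT : ∀ ω : (Fin n → X) × X,
        (∑ l : Λ ⊕ Λ', emp ω.1 Finset.univ (Sum.elim ψ φ l)
          * Sum.elim ψ (fun l x => -φ l x) l ω.2) = shat ω - shat' ω := by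
      intro ω
      show _ = (∑ l, emp ω.1 Finset.univ (ψ l) * ψ l ω.2)
        - ∑ l, emp ω.1 Finset.univ (φ l) * φ l ω.2
      simp [Fintype.sum_sum_type, mul_neg, sub_eq_add_neg, ← Finset.sum_neg_distrib]
    have hS : ∀ ω : (Fin n → X) × X,
        (∑ l : Λ ⊕ Λ', (∫ x, Sum.elim ψ φ l x ∂P)
          * Sum.elim ψ (fun l x => -φ l x) l ω.2) = sm ω - sm' ω := by
      intro ω
      show _ = (∑ l, (∫ x, ψ l x ∂P) * ψ l ω.2) - ∑ l, (∫ x, φ l x ∂P) * φ l ω.2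
      simp [Fintype.sum_sum_type, mul_neg, sub_eq_add_neg, ← Finset.sum_neg_distrib]
    simp_rw [hT, hS] at key
    show β₁₁ + β₂₂ - 2 * β =
      (n : ℝ) * ((∫ ω, (shat ω - shat' ω) ^ 2 ∂Q) - (∫ ω, shat ω - shat' ω ∂Q) ^ 2)
        - ((n : ℝ) + 1) * ((∫ ω, (sm ω - sm' ω) ^ 2 ∂Q) - (∫ ω, sm ω - sm' ω ∂Q) ^ 2)
    simp_rw [pow_two]
    refine Eq.trans ?_ key.symm
    have hcomm : ∀ (a : Λ') (b : Λ), (∫ x, φ a x * ψ b x ∂P) = ∫ x, ψ b x * φ a x ∂P := by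
      intro a b; congr 1; funext x; ring
    refine Eq.trans (b := ∑ l₁ : Λ ⊕ Λ', ∑ l₂ : Λ ⊕ Λ',
      Sum.elim (fun a => Sum.elim
          (fun b => ((∫ x, ψ a x * ψ b x ∂P) - (∫ x, ψ a x ∂P) * ∫ x, ψ b x ∂P) ^ 2)
          (fun b => -(((∫ x, ψ a x * φ b x ∂P) - (∫ x, ψ a x ∂P) * ∫ x, φ b x ∂P) ^ 2)) l₂)
        (fun a => Sum.elim
          (fun b => -(((∫ x, ψ b x * φ a x ∂P) - (∫ x, ψ b x ∂P) * ∫ x, φ a x ∂P) ^ 2))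
          (fun b => ((∫ x, φ a x * φ b x ∂P) - (∫ x, φ a x ∂P) * ∫ x, φ b x ∂P) ^ 2) l₂) l₁)
      ?_ ?_
    · have hβ : β = ∑ l, ∑ l',
          ((∫ x, ψ l x * φ l' x ∂P) - (∫ x, ψ l x ∂P) * ∫ x, φ l' x ∂P) ^ 2 := rfl
      have hβ₁₁ : β₁₁ = ∑ l, ∑ l',
          ((∫ x, ψ l x * ψ l' x ∂P) - (∫ x, ψ l x ∂P) * ∫ x, ψ l' x ∂P) ^ 2 := rfl
      have hβ₂₂ : β₂₂ = ∑ l, ∑ l',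
          ((∫ x, φ l x * φ l' x ∂P) - (∫ x, φ l x ∂P) * ∫ x, φ l' x ∂P) ^ 2 := rfl
      rw [hβ, hβ₁₁, hβ₂₂]
      simp only [Fintype.sum_sum_type, Sum.elim_inl, Sum.elim_inr]
      rw [Finset.sum_add_distrib, Finset.sum_add_distrib]
      simp only [Finset.sum_neg_distrib]
      have hD : (∑ a : Λ', ∑ b : Λ,
            ((∫ x, ψ b x * φ a x ∂P) - (∫ x, ψ b x ∂P) * ∫ x, φ a x ∂P) ^ 2)
          = ∑ b : Λ, ∑ a : Λ',
            ((∫ x, ψ b x * φ a x ∂P) - (∫ x, ψ b x ∂P) * ∫ x, φ a x ∂P) ^ 2 :=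
        Finset.sum_comm
      rw [hD]
      ring
    · refine Finset.sum_congr rfl fun l₁ _ => Finset.sum_congr rfl fun l₂ _ => ?_
      cases l₁ with
      | inl a =>
        cases l₂ with
        | inl b =>
          simp only [Sum.elim_inl]
          ring
        | inr b =>
          simp only [Sum.elim_inl, Sum.elim_inr, mul_neg, neg_mul, neg_neg, integral_neg]
          ring
      | inr a =>
        cases l₂ with
        | inl b =>
          simp only [Sum.elim_inl, Sum.elim_inr, mul_neg, neg_mul, neg_neg, integral_neg]
          rw [hcomm a b]
          ring
        | inr b =>
          simp only [Sum.elim_inl, Sum.elim_inr, mul_neg, neg_mul, neg_neg, integral_neg]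
          ring
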